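/- arXiv:2412.10815 — 2 statements merged into one kernel-verified Lean document; each statement's English description precedes it below -/
import Mathlib

section
/- The Hankel determinant of the moments equals 1/n! times the n-fold Heine integral: det(μ_{i+j})_{i,j=0}^{n-1} = (1/n!) ∫_{ℝ^n} ∏_{1≤i<j≤n} (x_i - x_j)^2 ∏_{k=1}^n w(x_k) dx_k, for any weight w with all moments finite. -/
open MeasureTheory

theorem heine_formula (w : ℝ → ℝ) (hw : ∀ x, 0 ≤ w x) (hwm : Measurable w)
    (hint : ∀ k : ℕ, Integrable (fun x : ℝ => |x|^k * w x))
    (μ : ℕ → ℝ) (hμ : ∀ k, μ k = ∫ x : ℝ, x^k * w x) (n : ℕ) :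
    Matrix.det (Matrix.of fun i j : Fin n => μ (i.1 + j.1))
      = (1 / n.factorial : ℝ) * ∫ x : Fin n → ℝ,
          (∏ i : Fin n, ∏ j ∈ Finset.Ioi i, (x i - x j)^2) * ∏ k : Fin n, w (x k) := by
  classical
  -- integrability of single-variable moment integrands
  have hf : ∀ m : ℕ, Integrable (fun x : ℝ => x ^ m * w x) := by
    intro m
    refine (hint m).mono' (((measurable_id.pow_const m).mul hwm).aestronglyMeasurable) ?_
    filter_upwards with x
    rw [Real.norm_eq_abs, abs_mul, abs_pow, abs_of_nonneg (hw x)]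
  -- Vandermonde square
  have hVdm : ∀ x : Fin n → ℝ,
      (∏ i : Fin n, ∏ j ∈ Finset.Ioi i, (x i - x j)^2) = ((Matrix.vandermonde x).det)^2 := by
    intro x
    rw [Matrix.det_vandermonde, ← Finset.prod_pow]
    refine Finset.prod_congr rfl fun i _ => ?_
    rw [← Finset.prod_pow]
    refine Finset.prod_congr rfl fun j _ => ?_
    rw [← neg_sub (x j) (x i), neg_sq]
  -- determinant expansion
  have hdet : ∀ x : Fin n → ℝ, (Matrix.vandermonde x).det
      = ∑ σ : Equiv.Perm (Fin n), ((Equiv.Perm.sign σ : ℤ) : ℝ)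
          * ∏ k, x k ^ ((σ⁻¹ k : Fin n) : ℕ) := by
    intro x
    rw [Matrix.det_apply]
    refine Finset.sum_congr rfl fun σ _ => ?_
    rw [Units.smul_def, zsmul_eq_mul]
    congr 1
    calc ∏ i, Matrix.vandermonde x (σ i) i
        = ∏ i, (fun k => x k ^ ((σ⁻¹ k : Fin n) : ℕ)) (σ i) := by
          refine Finset.prod_congr rfl fun i _ => ?_
          simp [Matrix.vandermonde]
      _ = _ := Equiv.prod_comp σ (fun k => x k ^ ((σ⁻¹ k : Fin n) : ℕ))
  -- pointwise identity for the integrand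
  have hpt : ∀ x : Fin n → ℝ,
      (∏ i : Fin n, ∏ j ∈ Finset.Ioi i, (x i - x j)^2) * ∏ k : Fin n, w (x k)
      = ∑ σ : Equiv.Perm (Fin n), ∑ τ : Equiv.Perm (Fin n),
          (((Equiv.Perm.sign σ : ℤ) : ℝ) * ((Equiv.Perm.sign τ : ℤ) : ℝ))
            * ∏ k, (x k ^ (((σ⁻¹ k : Fin n) : ℕ) + ((τ⁻¹ k : Fin n) : ℕ)) * w (x k)) := by
    intro x
    rw [hVdm, sq, hdet, Finset.sum_mul_sum, Finset.sum_mul]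
    refine Finset.sum_congr rfl fun σ _ => ?_
    rw [Finset.sum_mul]
    refine Finset.sum_congr rfl fun τ _ => ?_
    simp only [pow_add]
    rw [show (∏ k, (x k ^ ((σ⁻¹ k : Fin n) : ℕ) * x k ^ ((τ⁻¹ k : Fin n) : ℕ) * w (x k)))
        = (∏ k, x k ^ ((σ⁻¹ k : Fin n) : ℕ)) * (∏ k, x k ^ ((τ⁻¹ k : Fin n) : ℕ))
          * ∏ k, w (x k) by rw [← Finset.prod_mul_distrib, ← Finset.prod_mul_distrib]]
    ring
  -- compute the integral as a double sum of products of moments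
  have hInt : (∫ x : Fin n → ℝ,
        (∏ i : Fin n, ∏ j ∈ Finset.Ioi i, (x i - x j)^2) * ∏ k : Fin n, w (x k))
      = ∑ σ : Equiv.Perm (Fin n), ∑ τ : Equiv.Perm (Fin n),
          (((Equiv.Perm.sign σ : ℤ) : ℝ) * ((Equiv.Perm.sign τ : ℤ) : ℝ))
            * ∏ k, μ (((σ⁻¹ k : Fin n) : ℕ) + ((τ⁻¹ k : Fin n) : ℕ)) := by
    simp_rw [hpt]
    rw [integral_finset_sum]
    · refine Finset.sum_congr rfl fun σ _ => ?_
      rw [integral_finset_sum]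
      · refine Finset.sum_congr rfl fun τ _ => ?_
        rw [MeasureTheory.integral_const_mul,
          integral_fintype_prod_volume_eq_prod (𝕜 := ℝ) (ι := Fin n)
            (fun k t => t ^ (((σ⁻¹ k : Fin n) : ℕ) + ((τ⁻¹ k : Fin n) : ℕ)) * w t)]
        congr 1
        exact Finset.prod_congr rfl fun k _ => (hμ _).symm
      · intro τ _
        exact (Integrable.fintype_prod fun k => hf _).const_mul _
    · intro σ _
      exact integrable_finset_sum _ fun τ _ =>
        (Integrable.fintype_prod fun k => hf _).const_mul _
  -- algebraic identity: the double sum equals n! * det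
  have halg : (∑ σ : Equiv.Perm (Fin n), ∑ τ : Equiv.Perm (Fin n),
        (((Equiv.Perm.sign σ : ℤ) : ℝ) * ((Equiv.Perm.sign τ : ℤ) : ℝ))
          * ∏ k, μ (((σ⁻¹ k : Fin n) : ℕ) + ((τ⁻¹ k : Fin n) : ℕ)))
      = (n.factorial : ℝ) * Matrix.det (Matrix.of fun i j : Fin n => μ (i.1 + j.1)) := by
    have hinner : ∀ σ : Equiv.Perm (Fin n),
        (∑ τ : Equiv.Perm (Fin n),
          (((Equiv.Perm.sign σ : ℤ) : ℝ) * ((Equiv.Perm.sign τ : ℤ) : ℝ))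
            * ∏ k, μ (((σ⁻¹ k : Fin n) : ℕ) + ((τ⁻¹ k : Fin n) : ℕ)))
        = Matrix.det (Matrix.of fun i j : Fin n => μ (i.1 + j.1)) := by
      intro σ
      have hbij : Function.Bijective (fun ρ : Equiv.Perm (Fin n) => σ * ρ⁻¹) := by
        constructor
        · intro a b h
          simpa using h
        · intro τ
          exact ⟨(σ⁻¹ * τ)⁻¹, by group⟩
      rw [← Fintype.sum_bijective _ hbij _ _ (fun ρ => rfl)]
      rw [Matrix.det_apply]
      refine Finset.sum_congr rfl fun ρ _ => ?_
      have hsgn : (((Equiv.Perm.sign σ : ℤ) : ℝ) * ((Equiv.Perm.sign (σ * ρ⁻¹) : ℤ) : ℝ))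
          = ((Equiv.Perm.sign ρ : ℤ) : ℝ) := by
        rw [Equiv.Perm.sign_mul, Equiv.Perm.sign_inv]
        push_cast
        rcases Int.units_eq_one_or (Equiv.Perm.sign σ) with h | h <;> rw [h] <;> push_cast <;> ring
      have hprod : (∏ k, μ (((σ⁻¹ k : Fin n) : ℕ) + (((σ * ρ⁻¹)⁻¹ k : Fin n) : ℕ)))
          = ∏ i, (Matrix.of fun i j : Fin n => μ (i.1 + j.1)) (ρ i) i := by
        calc (∏ k, μ (((σ⁻¹ k : Fin n) : ℕ) + (((σ * ρ⁻¹)⁻¹ k : Fin n) : ℕ)))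
            = ∏ k, (fun i : Fin n => μ ((i : ℕ) + ((ρ i : Fin n) : ℕ))) (σ⁻¹ k) := by
              refine Finset.prod_congr rfl fun k _ => ?_
              simp [Equiv.Perm.mul_apply]
          _ = ∏ i, (fun i : Fin n => μ ((i : ℕ) + ((ρ i : Fin n) : ℕ))) i :=
              Equiv.prod_comp σ⁻¹ (fun i : Fin n => μ ((i : ℕ) + ((ρ i : Fin n) : ℕ)))
          _ = _ := by
              refine Finset.prod_congr rfl fun i _ => ?_
              simp [Matrix.of_apply, Nat.add_comm]
      rw [hsgn, hprod, Units.smul_def, zsmul_eq_mul]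
    simp_rw [hinner]
    rw [Finset.sum_const, Finset.card_univ, Fintype.card_perm, Fintype.card_fin, nsmul_eq_mul]
  rw [hInt, halg, ← mul_assoc, one_div, inv_mul_cancel₀ (by positivity : (n.factorial : ℝ) ≠ 0),
    one_mul]
end

section
/- For any real b > 0 and nonnegative integer k, the principal value integral P ∫_{-b}^{b} dx / ((x - y)√(b^2 - x^2)) = 0 for every y ∈ (-b, b). -/
open MeasureTheory

noncomputable def pvF (b y x : ℝ) : ℝ :=
  (Real.log (x - y) -
    Real.log (b^2 - x*y + Real.sqrt (b^2 - y^2) * Real.sqrt (b^2 - x^2))) / Real.sqrt (b^2 - y^2)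

lemma pvG_pos {b y x : ℝ} (hb : 0 < b) (hy1 : -b < y) (hy2 : y < b)
    (hx1 : -b ≤ x) (hx2 : x ≤ b) :
    0 < b^2 - x*y + Real.sqrt (b^2 - y^2) * Real.sqrt (b^2 - x^2) := by
  have h1 : x*y ≤ |x| * |y| := (le_abs_self _).trans (le_of_eq (abs_mul x y))
  have h2 : |x| ≤ b := abs_le.2 ⟨hx1, hx2⟩
  have h3 : |y| < b := abs_lt.2 ⟨hy1, hy2⟩
  have h4 : x*y < b^2 := by nlinarith [abs_nonneg x, abs_nonneg y]
  nlinarith [mul_nonneg (Real.sqrt_nonneg (b^2 - y^2)) (Real.sqrt_nonneg (b^2 - x^2))]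

lemma pv_hasDerivAt {b y : ℝ} (hb : 0 < b) (hy1 : -b < y) (hy2 : y < b)
    {x : ℝ} (hx1 : -b < x) (hx2 : x < b) (hxy : x ≠ y) :
    HasDerivAt (pvF b y) (1/((x - y)*Real.sqrt (b^2 - x^2))) x := by
  have hbx : 0 < b^2 - x^2 := by nlinarith
  have hby : 0 < b^2 - y^2 := by nlinarith
  have hs : 0 < Real.sqrt (b^2 - x^2) := Real.sqrt_pos.2 hbx
  have hc : 0 < Real.sqrt (b^2 - y^2) := Real.sqrt_pos.2 hby
  set s := Real.sqrt (b^2 - x^2) with hs_def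
  set c := Real.sqrt (b^2 - y^2) with hc_def
  have hs2 : s^2 = b^2 - x^2 := Real.sq_sqrt hbx.le
  have hc2 : c^2 = b^2 - y^2 := Real.sq_sqrt hby.le
  have hG : 0 < b^2 - x*y + c*s := pvG_pos hb hy1 hy2 hx1.le hx2.le
  have hlog1 : HasDerivAt (fun t => Real.log (t - y)) (1/(x-y)) x := by
    simpa using ((hasDerivAt_id x).sub_const y).log (sub_ne_zero.2 hxy)
  have hinner : HasDerivAt (fun t : ℝ => b^2 - t^2) (-(2*x)) x := by
    simpa using (hasDerivAt_pow 2 x).const_sub (b^2)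
  have hsq : HasDerivAt (fun t => Real.sqrt (b^2 - t^2)) (-x/s) x := by
    have := (Real.hasDerivAt_sqrt hbx.ne').comp x hinner
    refine this.congr_deriv ?_
    rw [← hs_def]
    field_simp
  have hGd : HasDerivAt (fun t => b^2 - t*y + c * Real.sqrt (b^2 - t^2))
      (-y + c * (-x/s)) x := by
    have h1 : HasDerivAt (fun t : ℝ => b^2 - t*y) (-y) x := by
      simpa using ((hasDerivAt_id x).mul_const y).const_sub (b^2)
    exact h1.add (hsq.const_mul c)
  have hlog2 : HasDerivAt (fun t => Real.log (b^2 - t*y + c * Real.sqrt (b^2 - t^2)))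
      ((-y + c * (-x/s))/(b^2 - x*y + c*s)) x := hGd.log hG.ne'
  have hF : HasDerivAt (pvF b y)
      ((1/(x-y) - (-y + c * (-x/s))/(b^2 - x*y + c*s))/c) x := (hlog1.sub hlog2).div_const c
  convert hF using 1
  have hxy' : x - y ≠ 0 := sub_ne_zero.2 hxy
  have hG' : b^2 - x*y + s*c ≠ 0 := by rw [mul_comm s c]; exact hG.ne'
  field_simp
  linear_combination s * hc2 - c * hs2

lemma pv_meas (b y : ℝ) :
    Measurable (fun x => 1/((x - y)*Real.sqrt (b^2 - x^2))) := by
  apply Measurable.div measurable_const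
  exact ((measurable_id.sub measurable_const).mul
    (Real.continuous_sqrt.measurable.comp (measurable_const.sub (measurable_id.pow_const 2))))

lemma pv_intble_left {b y ε : ℝ} (hb : 0 < b) (hy2 : y < b) (hε : 0 < ε)
    (h1 : -b < y - ε) :
    IntervalIntegrable (fun x => 1/((x - y)*Real.sqrt (b^2 - x^2))) volume (-b) (y-ε) := by
  have hle : -b ≤ y - ε := h1.le
  set C : ℝ := (ε * Real.sqrt (b - y + ε))⁻¹ with hC
  have hg : IntervalIntegrable (fun x => C * (x + b) ^ (-(1/2) : ℝ)) volume (-b) (y-ε) := by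
    have h0 : IntervalIntegrable (fun x : ℝ => x ^ (-(1/2) : ℝ)) volume 0 ((y-ε)+b) :=
      intervalIntegral.intervalIntegrable_rpow' (by norm_num)
    have h2 := (h0.comp_add_right b).const_mul C
    norm_num at h2
    exact h2
  apply hg.mono_fun' ((pv_meas b y).aestronglyMeasurable)
  rw [Filter.EventuallyLE, ae_restrict_iff' measurableSet_uIoc]
  refine Filter.Eventually.of_forall (fun x hx => ?_)
  rw [Set.uIoc_of_le hle] at hx
  obtain ⟨hxa, hxb⟩ := hx
  have hxb' : x < y := by linarith
  have hxB : x < b := by linarith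
  have hpos1 : 0 < y - x := by linarith
  have hbx : 0 < b^2 - x^2 := by nlinarith
  have hsp : 0 < Real.sqrt (b^2 - x^2) := Real.sqrt_pos.2 hbx
  have hxb0 : 0 < x + b := by linarith
  have hsplit : Real.sqrt (b^2 - x^2) = Real.sqrt (b - x) * Real.sqrt (x + b) := by
    rw [← Real.sqrt_mul (by linarith : (0:ℝ) ≤ b - x)]
    ring_nf
  have hmono : Real.sqrt (b - y + ε) ≤ Real.sqrt (b - x) :=
    Real.sqrt_le_sqrt (by linarith)
  have hsb : 0 < Real.sqrt (b - y + ε) := Real.sqrt_pos.2 (by linarith)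
  have hsx : 0 < Real.sqrt (x + b) := Real.sqrt_pos.2 hxb0
  have hnorm : ‖1/((x - y)*Real.sqrt (b^2 - x^2))‖
      = 1/((y - x)*Real.sqrt (b^2 - x^2)) := by
    rw [Real.norm_eq_abs, abs_div, abs_one, abs_mul, abs_of_pos hsp,
      abs_of_neg (by linarith : x - y < 0)]
    ring_nf
  rw [hnorm]
  have hrpow : (x + b) ^ (-(1/2) : ℝ) = (Real.sqrt (x + b))⁻¹ := by
    rw [Real.rpow_neg hxb0.le, Real.sqrt_eq_rpow]
  rw [hrpow, hC]
  have hge : ε * Real.sqrt (b - y + ε) * Real.sqrt (x + b)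
      ≤ (y - x) * Real.sqrt (b^2 - x^2) := by
    rw [hsplit]
    have h5 : ε * Real.sqrt (b - y + ε) ≤ (y - x) * Real.sqrt (b - x) :=
      mul_le_mul (by linarith) hmono hsb.le hpos1.le
    calc ε * Real.sqrt (b - y + ε) * Real.sqrt (x + b)
        ≤ (y - x) * Real.sqrt (b - x) * Real.sqrt (x + b) :=
          mul_le_mul_of_nonneg_right h5 hsx.le
      _ = (y - x) * (Real.sqrt (b - x) * Real.sqrt (x + b)) := by ring
  rw [one_div, mul_comm ((ε * Real.sqrt (b - y + ε))⁻¹), ← mul_inv]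
  exact inv_anti₀ (by positivity) (by linarith [hge])

lemma pv_intble_right {b y ε : ℝ} (hb : 0 < b) (hy1 : -b < y) (hε : 0 < ε)
    (h1 : y + ε < b) :
    IntervalIntegrable (fun x => 1/((x - y)*Real.sqrt (b^2 - x^2))) volume (y+ε) b := by
  have hle : y + ε ≤ b := h1.le
  set C : ℝ := (ε * Real.sqrt (y + ε + b))⁻¹ with hC
  have hg : IntervalIntegrable (fun x => C * (b - x) ^ (-(1/2) : ℝ)) volume (y+ε) b := by
    have h0 : IntervalIntegrable (fun x : ℝ => x ^ (-(1/2) : ℝ)) volume 0 (b-(y+ε)) :=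
      intervalIntegral.intervalIntegrable_rpow' (by norm_num)
    have h2 := (h0.comp_sub_left b).const_mul C
    norm_num at h2
    exact h2.symm
  apply hg.mono_fun' ((pv_meas b y).aestronglyMeasurable)
  rw [Filter.EventuallyLE, ae_restrict_iff' measurableSet_uIoc]
  refine Filter.Eventually.of_forall (fun x hx => ?_)
  rw [Set.uIoc_of_le hle] at hx
  obtain ⟨hxa, hxb⟩ := hx
  rcases eq_or_lt_of_le hxb with hxB | hxB
  · rw [hxB]
    have e1 : Real.sqrt (b^2 - b^2) = 0 := by norm_num
    have e2 : ((b - b) : ℝ) ^ (-(1/2) : ℝ) = 0 := by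
      rw [sub_self, Real.zero_rpow (by norm_num)]
    rw [e1, e2]
    simp
  have hxy : y < x := by linarith
  have hxA : -b < x := by linarith
  have hpos1 : 0 < x - y := by linarith
  have hbx0 : 0 < b - x := by linarith
  have hbx : 0 < b^2 - x^2 := by nlinarith
  have hsp : 0 < Real.sqrt (b^2 - x^2) := Real.sqrt_pos.2 hbx
  have hsplit : Real.sqrt (b^2 - x^2) = Real.sqrt (b - x) * Real.sqrt (x + b) := by
    rw [← Real.sqrt_mul hbx0.le]
    ring_nf
  have hmono : Real.sqrt (y + ε + b) ≤ Real.sqrt (x + b) :=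
    Real.sqrt_le_sqrt (by linarith)
  have hsb : 0 < Real.sqrt (y + ε + b) := Real.sqrt_pos.2 (by linarith)
  have hsx : 0 < Real.sqrt (b - x) := Real.sqrt_pos.2 hbx0
  have hnorm : ‖1/((x - y)*Real.sqrt (b^2 - x^2))‖
      = 1/((x - y)*Real.sqrt (b^2 - x^2)) := by
    rw [Real.norm_eq_abs]
    exact abs_of_pos (one_div_pos.2 (mul_pos hpos1 hsp))
  rw [hnorm]
  have hrpow : (b - x) ^ (-(1/2) : ℝ) = (Real.sqrt (b - x))⁻¹ := by
    rw [Real.rpow_neg hbx0.le, Real.sqrt_eq_rpow]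
  rw [hrpow, hC]
  have hge : ε * Real.sqrt (y + ε + b) * Real.sqrt (b - x)
      ≤ (x - y) * Real.sqrt (b^2 - x^2) := by
    rw [hsplit]
    have h5 : ε * Real.sqrt (y + ε + b) ≤ (x - y) * Real.sqrt (x + b) :=
      mul_le_mul (by linarith) hmono hsb.le hpos1.le
    calc ε * Real.sqrt (y + ε + b) * Real.sqrt (b - x)
        ≤ (x - y) * Real.sqrt (x + b) * Real.sqrt (b - x) :=
          mul_le_mul_of_nonneg_right h5 hsx.le
      _ = (x - y) * (Real.sqrt (b - x) * Real.sqrt (x + b)) := by ring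
  rw [one_div, mul_comm ((ε * Real.sqrt (y + ε + b))⁻¹), ← mul_inv]
  exact inv_anti₀ (by positivity) (by linarith [hge])

lemma pvF_contAt {b y x : ℝ} (hb : 0 < b) (hy1 : -b < y) (hy2 : y < b)
    (hx1 : -b ≤ x) (hx2 : x ≤ b) (hxy : x ≠ y) : ContinuousAt (pvF b y) x := by
  have hG := pvG_pos hb hy1 hy2 hx1 hx2
  have hxy' : x - y ≠ 0 := sub_ne_zero.2 hxy
  unfold pvF
  apply ContinuousAt.div_const
  apply ContinuousAt.sub
  · exact ContinuousAt.log ((continuous_id.sub continuous_const).continuousAt) hxy'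
  · exact ContinuousAt.log
      ((by fun_prop : Continuous fun x : ℝ =>
        b^2 - x*y + Real.sqrt (b^2 - y^2) * Real.sqrt (b^2 - x^2)).continuousAt) hG.ne'

lemma pv_sum_eq {b y ε : ℝ} (hb : 0 < b) (hy1 : -b < y) (hy2 : y < b) (hε : 0 < ε)
    (h1 : -b < y - ε) (h2 : y + ε < b) :
    (pvF b y (y-ε) - pvF b y (-b)) + (pvF b y b - pvF b y (y+ε))
      = (Real.log (b^2 - (y+ε)*y + Real.sqrt (b^2-y^2) * Real.sqrt (b^2 - (y+ε)^2))
        - Real.log (b^2 - (y-ε)*y + Real.sqrt (b^2-y^2) * Real.sqrt (b^2 - (y-ε)^2)))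
        / Real.sqrt (b^2-y^2) := by
  unfold pvF
  have e1 : (y - ε) - y = -ε := by ring
  have e2 : (-b) - y = -(b + y) := by ring
  have e3 : (y + ε) - y = ε := by ring
  have e4 : Real.sqrt (b^2 - (-b)^2) = 0 := by norm_num
  have e5 : Real.sqrt (b^2 - b^2) = 0 := by norm_num
  rw [e1, e2, e3, e4, e5, Real.log_neg_eq_log ε, Real.log_neg_eq_log (b+y)]
  have e6 : b^2 - (-b)*y + Real.sqrt (b^2 - y^2)*0 = b*(b+y) := by ring
  have e7 : b^2 - b*y + Real.sqrt (b^2 - y^2)*0 = b*(b-y) := by ring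
  rw [e6, e7, Real.log_mul hb.ne' (by linarith : (0:ℝ) < b + y).ne',
    Real.log_mul hb.ne' (by linarith : (0:ℝ) < b - y).ne']
  ring

theorem principal_value_vanishes (b : ℝ) (hb : 0 < b) (y : ℝ) (hy : y ∈ Set.Ioo (-b) b) :
    Filter.Tendsto (fun ε : ℝ =>
        (∫ x in Set.Ioo (-b) (y - ε), 1/((x - y)*Real.sqrt (b^2 - x^2))) +
        ∫ x in Set.Ioo (y + ε) b, 1/((x - y)*Real.sqrt (b^2 - x^2)))
      (nhdsWithin 0 (Set.Ioi 0)) (nhds 0) := by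
  obtain ⟨hy1, hy2⟩ := hy
  have hby : 0 < b^2 - y^2 := by nlinarith
  have hc : 0 < Real.sqrt (b^2 - y^2) := Real.sqrt_pos.2 hby
  set ψ : ℝ → ℝ := fun ε =>
    (Real.log (b^2 - (y+ε)*y + Real.sqrt (b^2-y^2) * Real.sqrt (b^2 - (y+ε)^2))
      - Real.log (b^2 - (y-ε)*y + Real.sqrt (b^2-y^2) * Real.sqrt (b^2 - (y-ε)^2)))
      / Real.sqrt (b^2-y^2) with hψ
  have hGy : 0 < b^2 - y*y + Real.sqrt (b^2-y^2) * Real.sqrt (b^2 - y^2) :=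
    pvG_pos hb hy1 hy2 hy1.le hy2.le
  have hcont : ContinuousAt ψ 0 := by
    apply ContinuousAt.div_const
    apply ContinuousAt.sub
    · apply ContinuousAt.log
      · exact (by fun_prop : Continuous fun ε : ℝ =>
          b^2 - (y+ε)*y + Real.sqrt (b^2-y^2) * Real.sqrt (b^2 - (y+ε)^2)).continuousAt
      · simpa using hGy.ne'
    · apply ContinuousAt.log
      · exact (by fun_prop : Continuous fun ε : ℝ =>
          b^2 - (y-ε)*y + Real.sqrt (b^2-y^2) * Real.sqrt (b^2 - (y-ε)^2)).continuousAt
      · simpa using hGy.ne'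
  have hψ0 : ψ 0 = 0 := by simp [hψ]
  have hlim : Filter.Tendsto ψ (nhdsWithin 0 (Set.Ioi 0)) (nhds 0) := by
    have := hcont.tendsto
    rw [hψ0] at this
    exact this.mono_left nhdsWithin_le_nhds
  apply Filter.Tendsto.congr' ?_ hlim
  have hδ : (0:ℝ) < min (y + b) (b - y) := lt_min (by linarith) (by linarith)
  filter_upwards [Ioo_mem_nhdsGT_of_mem (Set.left_mem_Ico.2 hδ)] with ε hε
  obtain ⟨hε0, hεδ⟩ := hε
  have hε1 : ε < y + b := lt_of_lt_of_le hεδ (min_le_left _ _)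
  have hε2 : ε < b - y := lt_of_lt_of_le hεδ (min_le_right _ _)
  have h1 : -b < y - ε := by linarith
  have h2 : y + ε < b := by linarith
  have hL : (∫ x in Set.Ioo (-b) (y - ε), 1/((x - y)*Real.sqrt (b^2 - x^2)))
      = pvF b y (y-ε) - pvF b y (-b) := by
    rw [← MeasureTheory.integral_Ioc_eq_integral_Ioo,
      ← intervalIntegral.integral_of_le h1.le]
    exact intervalIntegral.integral_eq_sub_of_hasDerivAt_of_tendsto h1
      (fun x hx => pv_hasDerivAt hb hy1 hy2 hx.1 (by linarith [hx.2])
        (ne_of_lt (by linarith [hx.2])))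
      (pv_intble_left hb hy2 hε0 h1)
      ((pvF_contAt hb hy1 hy2 (le_refl (-b)) (by linarith) (ne_of_lt hy1)).continuousWithinAt)
      ((pvF_contAt hb hy1 hy2 (by linarith) (by linarith)
        (ne_of_lt (by linarith))).continuousWithinAt)
  have hR : (∫ x in Set.Ioo (y + ε) b, 1/((x - y)*Real.sqrt (b^2 - x^2)))
      = pvF b y b - pvF b y (y+ε) := by
    rw [← MeasureTheory.integral_Ioc_eq_integral_Ioo,
      ← intervalIntegral.integral_of_le h2.le]
    exact intervalIntegral.integral_eq_sub_of_hasDerivAt_of_tendsto h2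
      (fun x hx => pv_hasDerivAt hb hy1 hy2 (by linarith [hx.1]) hx.2
        (ne_of_gt (by linarith [hx.1])))
      (pv_intble_right hb hy1 hε0 h2)
      ((pvF_contAt hb hy1 hy2 (by linarith) (by linarith)
        (ne_of_gt (by linarith))).continuousWithinAt)
      ((pvF_contAt hb hy1 hy2 (by linarith) (le_refl b) (ne_of_gt hy2)).continuousWithinAt)
  rw [hL, hR, hψ]
  exact (pv_sum_eq hb hy1 hy2 hε0 h1 h2).symm
end
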